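/- Let X be an integrable real random variable on a probability space and β ∈ (0,1). Define the Value-at-Risk VaR_β[X] = inf{t ∈ ℝ : ℙ[X ≤ t] ≥ β}. Then the infimum in the Rockafellar–Uryasev formula is attained at t = VaR_β[X], i.e. CVaR_β[X] = inf_{t∈ℝ} { t + (1−β)^{−1}·E[(X − t)_+] } = VaR_β[X] + (1−β)^{−1}·E[(X − VaR_β[X])_+]. -/

import Mathlib

open MeasureTheory Filter Topology ENNReal

private lemma CVaR_pw_ge {x v t : ℝ} (h : v ≤ t) :
    max (x - v) 0 ≤ max (x - t) 0 + (if v < x then t - v else 0) := by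
  have h1 : x - t ≤ max (x - t) 0 := le_max_left _ _
  have h2 : (0:ℝ) ≤ max (x - t) 0 := le_max_right _ _
  split_ifs with hx <;> apply max_le <;> nlinarith

private lemma CVaR_pw_le {x v t : ℝ} (h : t ≤ v) :
    max (x - v) 0 + (if v ≤ x then v - t else 0) ≤ max (x - t) 0 := by
  split_ifs with hx
  · rcases le_or_gt (x - v) 0 with h3 | h3
    · rw [max_eq_right h3, max_eq_left (by linarith : (0:ℝ) ≤ x - t)]; linarith
    · rw [max_eq_left h3.le, max_eq_left (by linarith : (0:ℝ) ≤ x - t)]; linarith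
  · rw [add_zero]; exact max_le_max (by linarith) le_rfl

private theorem CVaR_aux {Ω : Type*} [MeasurableSpace Ω]
    (μ : Measure Ω) [IsProbabilityMeasure μ] (X : Ω → ℝ) (hXm : Measurable X)
    (hX : Integrable X μ)
    (β : ℝ) (hβ : β ∈ Set.Ioo (0 : ℝ) 1)
    (v : ℝ) (hv : v = sInf {t : ℝ | β ≤ (μ {ω | X ω ≤ t}).toReal}) :
    (⨅ t : ℝ, (t + (1 - β)⁻¹ * ∫ ω, max (X ω - t) 0 ∂μ))
      = v + (1 - β)⁻¹ * ∫ ω, max (X ω - v) 0 ∂μ := by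
  obtain ⟨hβ0, hβ1⟩ := hβ
  have hc : (0:ℝ) < 1 - β := by linarith
  set S : Set ℝ := {t : ℝ | β ≤ (μ {ω | X ω ≤ t}).toReal} with hS
  have hmono : ∀ {a b : ℝ}, a ≤ b →
      (μ {ω | X ω ≤ a}).toReal ≤ (μ {ω | X ω ≤ b}).toReal := by
    intro a b hab
    exact ENNReal.toReal_mono (measure_ne_top μ _)
      (measure_mono fun ω h => le_trans h hab)
  have hup : ∀ {a b : ℝ}, a ∈ S → a ≤ b → b ∈ S := fun ha hab => le_trans ha (hmono hab)
  -- S is nonempty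
  have hne : S.Nonempty := by
    have hU : (⋃ n : ℕ, {ω | X ω ≤ (n:ℝ)}) = Set.univ := by
      ext ω
      simp only [Set.mem_iUnion, Set.mem_univ, iff_true, Set.mem_setOf_eq]
      obtain ⟨n, hn⟩ := exists_nat_ge (X ω)
      exact ⟨n, hn⟩
    have hmon : Monotone (fun n : ℕ => {ω | X ω ≤ (n:ℝ)}) := by
      intro a b hab ω h
      simp only [Set.mem_setOf_eq] at h ⊢
      exact le_trans h (by exact_mod_cast hab)
    have h1 := tendsto_measure_iUnion_atTop (μ := μ) hmon
    rw [hU, measure_univ] at h1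
    have h2 : Tendsto (fun n : ℕ => (μ {ω | X ω ≤ (n:ℝ)}).toReal) atTop (𝓝 1) := by
      have := (ENNReal.tendsto_toReal (by norm_num : (1:ℝ≥0∞) ≠ ⊤)).comp h1
      exact this
    obtain ⟨n, hn⟩ := (h2.eventually (eventually_gt_nhds hβ1)).exists
    exact ⟨n, hn.le⟩
  -- S is bounded below
  have hbdd : BddBelow S := by
    have hI : (⋂ n : ℕ, {ω | X ω ≤ -(n:ℝ)}) = ∅ := by
      ext ω
      simp only [Set.mem_iInter, Set.mem_empty_iff_false, iff_false, not_forall,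
        Set.mem_setOf_eq, not_le]
      obtain ⟨n, hn⟩ := exists_nat_gt (-X ω)
      exact ⟨n, by linarith⟩
    have hant : Antitone (fun n : ℕ => {ω | X ω ≤ -(n:ℝ)}) := by
      intro a b hab ω h
      simp only [Set.mem_setOf_eq] at h ⊢
      refine le_trans h (neg_le_neg ?_)
      exact_mod_cast hab
    have h1 := tendsto_measure_iInter_atTop (μ := μ)
      (fun n => (measurableSet_le hXm measurable_const).nullMeasurableSet) hant
      ⟨0, measure_ne_top μ _⟩
    rw [hI, measure_empty] at h1
    have h2 : Tendsto (fun n : ℕ => (μ {ω | X ω ≤ -(n:ℝ)}).toReal) atTop (𝓝 0) := by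
      have := (ENNReal.tendsto_toReal (by norm_num : (0:ℝ≥0∞) ≠ ⊤)).comp h1
      exact this
    obtain ⟨n, hn⟩ := (h2.eventually (eventually_lt_nhds hβ0)).exists
    refine ⟨-(n:ℝ), fun t ht => ?_⟩
    by_contra hlt
    push_neg at hlt
    exact absurd (le_trans ht (hmono hlt.le)) (not_le.2 hn)
  -- Step A : β ≤ ℙ[X ≤ v]
  have hvS : β ≤ (μ {ω | X ω ≤ v}).toReal := by
    have hseq : ∀ n : ℕ, v + 1/(n+1) ∈ S := by
      intro n
      have hpos : (0:ℝ) < 1/((n:ℝ)+1) := by positivity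
      have : sInf S < v + 1/(n+1) := by rw [← hv]; linarith
      obtain ⟨s, hsS, hs⟩ := (csInf_lt_iff hbdd hne).1 this
      exact hup hsS hs.le
    have hant : Antitone (fun n : ℕ => {ω | X ω ≤ v + 1/((n:ℝ)+1)}) := by
      intro a b hab ω h
      simp only [Set.mem_setOf_eq] at h ⊢
      refine le_trans h (add_le_add le_rfl ?_)
      apply one_div_le_one_div_of_le (by positivity)
      have : (a:ℝ) ≤ (b:ℝ) := by exact_mod_cast hab
      linarith
    have hIeq : (⋂ n : ℕ, {ω | X ω ≤ v + 1/((n:ℝ)+1)}) = {ω | X ω ≤ v} := by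
      ext ω
      simp only [Set.mem_iInter, Set.mem_setOf_eq]
      constructor
      · intro h
        by_contra hlt
        push_neg at hlt
        obtain ⟨n, hn⟩ := exists_nat_one_div_lt (by linarith : (0:ℝ) < X ω - v)
        have := h n
        linarith
      · intro h n
        have hpos : (0:ℝ) < 1/((n:ℝ)+1) := by positivity
        linarith
    have h1 := tendsto_measure_iInter_atTop (μ := μ)
      (fun n => (measurableSet_le hXm measurable_const).nullMeasurableSet) hant
      ⟨0, measure_ne_top μ _⟩
    rw [hIeq] at h1
    have h2 : Tendsto (fun n : ℕ => (μ {ω | X ω ≤ v + 1/((n:ℝ)+1)}).toReal) atTop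
        (𝓝 (μ {ω | X ω ≤ v}).toReal) := by
      have := (ENNReal.tendsto_toReal (measure_ne_top μ _)).comp h1
      exact this
    exact ge_of_tendsto' h2 fun n => hseq n
  -- Step B : ℙ[X < v] ≤ β
  have hltv : (μ {ω | X ω < v}).toReal ≤ β := by
    have hnotS : ∀ n : ℕ, (μ {ω | X ω ≤ v - 1/((n:ℝ)+1)}).toReal ≤ β := by
      intro n
      have hpos : (0:ℝ) < 1/((n:ℝ)+1) := by positivity
      by_contra hgt
      push_neg at hgt
      have hmem : v - 1/((n:ℝ)+1) ∈ S := hgt.le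
      have := csInf_le hbdd hmem
      rw [← hv] at this
      linarith
    have hmon : Monotone (fun n : ℕ => {ω | X ω ≤ v - 1/((n:ℝ)+1)}) := by
      intro a b hab ω h
      simp only [Set.mem_setOf_eq] at h ⊢
      refine le_trans h (sub_le_sub_left ?_ v)
      apply one_div_le_one_div_of_le (by positivity)
      have : (a:ℝ) ≤ (b:ℝ) := by exact_mod_cast hab
      linarith
    have hUeq : (⋃ n : ℕ, {ω | X ω ≤ v - 1/((n:ℝ)+1)}) = {ω | X ω < v} := by
      ext ω
      simp only [Set.mem_iUnion, Set.mem_setOf_eq]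
      constructor
      · rintro ⟨n, hn⟩
        have hpos : (0:ℝ) < 1/((n:ℝ)+1) := by positivity
        linarith
      · intro h
        obtain ⟨n, hn⟩ := exists_nat_one_div_lt (by linarith : (0:ℝ) < v - X ω)
        exact ⟨n, by linarith⟩
    have h1 := tendsto_measure_iUnion_atTop (μ := μ) hmon
    rw [hUeq] at h1
    have h2 : Tendsto (fun n : ℕ => (μ {ω | X ω ≤ v - 1/((n:ℝ)+1)}).toReal) atTop
        (𝓝 (μ {ω | X ω < v}).toReal) := by
      have := (ENNReal.tendsto_toReal (measure_ne_top μ _)).comp h1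
      exact this
    exact le_of_tendsto' h2 hnotS
  -- tail bounds
  have hgt : (μ {ω | v < X ω}).toReal ≤ 1 - β := by
    have hcompl : {ω | v < X ω} = {ω | X ω ≤ v}ᶜ := by
      ext ω; simp [not_le]
    rw [hcompl, prob_compl_eq_one_sub (measurableSet_le hXm measurable_const),
      ENNReal.toReal_sub_of_le prob_le_one (by norm_num), ENNReal.toReal_one]
    linarith
  have hge : 1 - β ≤ (μ {ω | v ≤ X ω}).toReal := by
    have hcompl : {ω | v ≤ X ω} = {ω | X ω < v}ᶜ := by
      ext ω; simp [not_lt]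
    rw [hcompl, prob_compl_eq_one_sub (measurableSet_lt hXm measurable_const),
      ENNReal.toReal_sub_of_le prob_le_one (by norm_num), ENNReal.toReal_one]
    linarith
  -- integrability
  have hInt : ∀ t : ℝ, Integrable (fun ω => max (X ω - t) 0) μ := fun t =>
    (hX.sub (integrable_const t)).pos_part
  have hcpos : (0:ℝ) < (1-β)⁻¹ := inv_pos.2 hc
  have hkey : (1 - β)⁻¹ * (1 - β) = 1 := inv_mul_cancel₀ hc.ne'
  -- the main inequality
  have key : ∀ t : ℝ, v + (1-β)⁻¹ * ∫ ω, max (X ω - v) 0 ∂μ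
      ≤ t + (1-β)⁻¹ * ∫ ω, max (X ω - t) 0 ∂μ := by
    intro t
    rcases le_total v t with hvt | htv
    · have hmeas : MeasurableSet {ω | v < X ω} := measurableSet_lt measurable_const hXm
      have hint : ∫ ω, max (X ω - v) 0 ∂μ
          ≤ ∫ ω, (max (X ω - t) 0 + Set.indicator {ω | v < X ω} (fun _ => t - v) ω) ∂μ := by
        apply integral_mono (hInt v) (((hInt t)).add ((integrable_const (t-v)).indicator hmeas))
        intro ω
        simpa [Set.indicator_apply] using CVaR_pw_ge (x := X ω) hvt
      rw [integral_add (hInt t) ((integrable_const (t-v)).indicator hmeas),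
        integral_indicator_const _ hmeas, smul_eq_mul] at hint
      set p := (μ {ω | v < X ω}).toReal with hp
      set Fv := ∫ ω, max (X ω - v) 0 ∂μ
      set Ft := ∫ ω, max (X ω - t) 0 ∂μ
      have e1 : (1-β)⁻¹ * p * (t - v) ≤ t - v := by
        calc (1-β)⁻¹ * p * (t - v)
            ≤ ((1-β)⁻¹ * (1 - β)) * (t - v) :=
              mul_le_mul_of_nonneg_right
                (mul_le_mul_of_nonneg_left hgt hcpos.le) (sub_nonneg.2 hvt)
          _ = t - v := by rw [hkey, one_mul]
      have e2 : (1-β)⁻¹ * Fv ≤ (1-β)⁻¹ * (Ft + p * (t - v)) :=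
        mul_le_mul_of_nonneg_left hint hcpos.le
      nlinarith [e1, e2]
    · have hmeas : MeasurableSet {ω | v ≤ X ω} := measurableSet_le measurable_const hXm
      have hint : ∫ ω, (max (X ω - v) 0 + Set.indicator {ω | v ≤ X ω} (fun _ => v - t) ω) ∂μ
          ≤ ∫ ω, max (X ω - t) 0 ∂μ := by
        apply integral_mono (((hInt v)).add ((integrable_const (v-t)).indicator hmeas)) (hInt t)
        intro ω
        simpa [Set.indicator_apply] using CVaR_pw_le (x := X ω) htv
      rw [integral_add (hInt v) ((integrable_const (v-t)).indicator hmeas),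
        integral_indicator_const _ hmeas, smul_eq_mul] at hint
      set q := (μ {ω | v ≤ X ω}).toReal with hq
      set Fv := ∫ ω, max (X ω - v) 0 ∂μ
      set Ft := ∫ ω, max (X ω - t) 0 ∂μ
      have e1 : v - t ≤ (1-β)⁻¹ * q * (v - t) := by
        calc v - t = ((1-β)⁻¹ * (1 - β)) * (v - t) := by rw [hkey, one_mul]
          _ ≤ (1-β)⁻¹ * q * (v - t) :=
              mul_le_mul_of_nonneg_right
                (mul_le_mul_of_nonneg_left hge hcpos.le) (sub_nonneg.2 htv)
      have e2 : (1-β)⁻¹ * (Fv + q * (v - t)) ≤ (1-β)⁻¹ * Ft :=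
        mul_le_mul_of_nonneg_left hint hcpos.le
      nlinarith [e1, e2]
  apply le_antisymm
  · refine ciInf_le ⟨v + (1-β)⁻¹ * ∫ ω, max (X ω - v) 0 ∂μ, ?_⟩ v
    rintro y ⟨t, rfl⟩
    exact key t
  · exact le_ciInf key

/-- For an integrable random variable `X` on a probability space and `β ∈ (0,1)`, the infimum
in the Rockafellar–Uryasev formula for `CVaR_β[X]` is attained at
`t = VaR_β[X] = inf {t : ℙ[X ≤ t] ≥ β}`:
`⨅ t, (t + (1−β)⁻¹·E[(X−t)₊]) = VaR_β[X] + (1−β)⁻¹·E[(X − VaR_β[X])₊]`. -/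
theorem CVaR_inf_attained_at_VaR {Ω : Type*} [MeasurableSpace Ω]
    (μ : Measure Ω) [IsProbabilityMeasure μ] (X : Ω → ℝ) (hX : Integrable X μ)
    (β : ℝ) (hβ : β ∈ Set.Ioo (0 : ℝ) 1)
    (v : ℝ) (hv : v = sInf {t : ℝ | β ≤ (μ {ω | X ω ≤ t}).toReal}) :
    (⨅ t : ℝ, (t + (1 - β)⁻¹ * ∫ ω, max (X ω - t) 0 ∂μ))
      = v + (1 - β)⁻¹ * ∫ ω, max (X ω - v) 0 ∂μ := by
  set Y := hX.aestronglyMeasurable.mk X with hY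
  have hYm : Measurable Y := hX.aestronglyMeasurable.stronglyMeasurable_mk.measurable
  have hae : X =ᵐ[μ] Y := hX.aestronglyMeasurable.ae_eq_mk
  have hYint : Integrable Y μ := hX.congr hae
  have hμeq : ∀ t : ℝ, μ {ω | X ω ≤ t} = μ {ω | Y ω ≤ t} := by
    intro t
    apply measure_congr
    filter_upwards [hae] with ω h
    show (X ω ≤ t) = (Y ω ≤ t)
    rw [h]
  have hieq : ∀ t : ℝ, (∫ ω, max (X ω - t) 0 ∂μ) = ∫ ω, max (Y ω - t) 0 ∂μ := by
    intro t
    apply integral_congr_ae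
    filter_upwards [hae] with ω h
    rw [h]
  have hv' : v = sInf {t : ℝ | β ≤ (μ {ω | Y ω ≤ t}).toReal} := by
    rw [hv]
    congr 1
    ext t
    rw [Set.mem_setOf_eq, Set.mem_setOf_eq, hμeq t]
  calc (⨅ t : ℝ, (t + (1 - β)⁻¹ * ∫ ω, max (X ω - t) 0 ∂μ))
      = ⨅ t : ℝ, (t + (1 - β)⁻¹ * ∫ ω, max (Y ω - t) 0 ∂μ) := by
        congr 1; ext t; rw [hieq t]
    _ = v + (1 - β)⁻¹ * ∫ ω, max (Y ω - v) 0 ∂μ :=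
        CVaR_aux μ Y hYm hYint β hβ v hv'
    _ = v + (1 - β)⁻¹ * ∫ ω, max (X ω - v) 0 ∂μ := by rw [hieq v]
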